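/- Let g : ℝⁿ → ℝ be continuously differentiable and h : ℝⁿ → ℝ convex, and define f = g + h and φ(y,x) = g(x) + ∇g(x)ᵀ(y − x) + h(y). Then φ(·,x) is convex, φ(x,x) = f(x), ∂₁φ(x,x) = ∇g(x) + ∂h(x) = ∂f(x), and for all sequences x_k → x, y_k → x there exist ε_k → 0⁺ with f(y_k) ≤ φ(y_k, x_k) + ε_k‖y_k − x_k‖; i.e., φ is a strict first-order model of f. -/

import Mathlib

open scoped RealInnerProductSpace
open Filter

lemma gradient_inner_eq {n : ℕ} (g : EuclideanSpace ℝ (Fin n) → ℝ)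
    (x v : EuclideanSpace ℝ (Fin n)) :
    ⟪gradient g x, v⟫ = fderiv ℝ g x v := by
  simp [gradient, InnerProductSpace.toDual_symm_apply]

/-- The splitting model: for `f = g + h` with `g` of class `C¹` and `h`
convex, `φ(y,x) = g(x) + ⟪∇g(x), y − x⟫ + h(y)` is a strict first-order model
of `f`: `φ(·,x)` is convex, `φ(x,x) = f(x)`,
`∂₁φ(x,x) = ∇g(x) + ∂h(x)`, and axiom (M̃₂) holds. -/
theorem splitting_model_strict {n : ℕ}
    (g h : EuclideanSpace ℝ (Fin n) → ℝ)
    (hg : ContDiff ℝ 1 g) (hh : ConvexOn ℝ Set.univ h)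
    (φ : EuclideanSpace ℝ (Fin n) → EuclideanSpace ℝ (Fin n) → ℝ)
    (hφ : ∀ y x, φ y x = g x + ⟪gradient g x, y - x⟫ + h y) :
    (∀ x, ConvexOn ℝ Set.univ (fun y => φ y x)) ∧
    (∀ x, φ x x = g x + h x) ∧
    (∀ x, {p | ∀ y, φ x x + ⟪p, y - x⟫ ≤ φ y x}
        = (fun q => gradient g x + q) '' {q | ∀ y, h x + ⟪q, y - x⟫ ≤ h y}) ∧
    (∀ (x : EuclideanSpace ℝ (Fin n)) (xk yk : ℕ → EuclideanSpace ℝ (Fin n)),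
      Tendsto xk atTop (nhds x) → Tendsto yk atTop (nhds x) →
      ∃ ε : ℕ → ℝ, Tendsto ε atTop (nhds 0) ∧ (∀ k, 0 ≤ ε k) ∧
        ∀ k, g (yk k) + h (yk k) ≤ φ (yk k) (xk k) + ε k * ‖yk k - xk k‖) := by
  have hxx : ∀ x, φ x x = g x + h x := by
    intro x; rw [hφ]; simp
  refine ⟨?_, hxx, ?_, ?_⟩
  · -- convexity
    intro x
    have hlin : ConvexOn ℝ Set.univ
        (fun y : EuclideanSpace ℝ (Fin n) => ⟪gradient g x, y⟫) :=
      (innerSL ℝ (gradient g x)).toLinearMap.convexOn convex_univ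
    have heq : (fun y => φ y x)
        = (fun _ : EuclideanSpace ℝ (Fin n) => g x - ⟪gradient g x, x⟫)
          + (fun y : EuclideanSpace ℝ (Fin n) => ⟪gradient g x, y⟫) + h := by
      funext y
      simp only [Pi.add_apply, hφ, inner_sub_right]
      ring
    rw [heq]
    exact ((convexOn_const _ convex_univ).add hlin).add hh
  · -- subdifferential
    intro x
    ext p
    simp only [Set.mem_setOf_eq, Set.mem_image]
    constructor
    · intro hp
      refine ⟨p - gradient g x, ?_, by abel⟩
      intro y
      have := hp y
      rw [hxx x, hφ y x] at this
      rw [inner_sub_left]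
      linarith
    · rintro ⟨q, hq, rfl⟩
      intro y
      rw [hxx x, hφ y x, inner_add_left]
      linarith [hq y]
  · -- strictness
    intro x xk yk hxk hyk
    have hgrad_cont : Continuous (fun z => gradient g z) := by
      have : Continuous (fun z => fderiv ℝ g z) := hg.continuous_fderiv one_ne_zero
      exact (InnerProductSpace.toDual ℝ
        (EuclideanSpace ℝ (Fin n))).symm.continuous.comp this
    have hstrict : HasStrictFDerivAt g (fderiv ℝ g x) x :=
      hg.hasStrictFDerivAt one_ne_zero
    have hpair : Tendsto (fun k => (yk k, xk k)) atTop (nhds (x, x)) :=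
      hyk.prodMk_nhds hxk
    have hlo := (hstrict.isLittleO.comp_tendsto hpair :
      (fun k => g (yk k) - g (xk k) - fderiv ℝ g x (yk k - xk k)) =o[atTop]
        (fun k => yk k - xk k))
    set u : ℕ → ℝ := fun k => g (yk k) - g (xk k) - fderiv ℝ g x (yk k - xk k)
      with hu
    set v : ℕ → EuclideanSpace ℝ (Fin n) := fun k => yk k - xk k with hv
    have hlo' : (fun k => ‖u k‖) =o[atTop] (fun k => ‖v k‖) := hlo.norm_norm
    have hz : ∀ k, ‖v k‖ = 0 → ‖u k‖ = 0 := by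
      intro k hk
      have : yk k = xk k := by
        have := norm_eq_zero.mp hk
        rwa [sub_eq_zero] at this
      simp [hu, hv, this]
    have hδ : Tendsto (fun k => ‖u k‖ / ‖v k‖) atTop (nhds 0) :=
      (Asymptotics.isLittleO_iff_tendsto hz).mp hlo'
    set c : ℕ → ℝ := fun k => ‖gradient g (xk k) - gradient g x‖ with hc
    have hctend : Tendsto c atTop (nhds 0) := by
      have : Tendsto (fun k => gradient g (xk k) - gradient g x) atTop (nhds 0) := by
        have := (hgrad_cont.tendsto x).comp hxk
        simpa using this.sub_const (gradient g x)
      simpa using this.norm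
    refine ⟨fun k => ‖u k‖ / ‖v k‖ + c k, by simpa using hδ.add hctend,
      fun k => add_nonneg (div_nonneg (norm_nonneg _) (norm_nonneg _)) (norm_nonneg _),
      ?_⟩
    intro k
    rw [hφ]
    have hub : ‖u k‖ ≤ (‖u k‖ / ‖v k‖) * ‖v k‖ := by
      rcases eq_or_ne (‖v k‖) 0 with hk | hk
      · simp [hz k hk, hk]
      · rw [div_mul_cancel₀ _ hk]
    have hinner : ⟪gradient g x - gradient g (xk k), v k⟫ ≤ c k * ‖v k‖ := by
      calc ⟪gradient g x - gradient g (xk k), v k⟫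
          ≤ ‖gradient g x - gradient g (xk k)‖ * ‖v k‖ := real_inner_le_norm _ _
        _ = c k * ‖v k‖ := by rw [hc, norm_sub_rev]
    have hkey : g (yk k) - g (xk k) - ⟪gradient g (xk k), yk k - xk k⟫
        = u k + ⟪gradient g x - gradient g (xk k), v k⟫ := by
      simp only [hu, hv, inner_sub_left, gradient_inner_eq]
      ring
    have huk : u k ≤ ‖u k‖ := le_abs_self _
    have hmain : g (yk k) - g (xk k) - ⟪gradient g (xk k), yk k - xk k⟫
        ≤ (‖u k‖ / ‖v k‖ + c k) * ‖v k‖ := by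
      rw [hkey, add_mul]
      exact add_le_add (le_trans huk hub) hinner
    have hvn : ‖yk k - xk k‖ = ‖v k‖ := rfl
    rw [hvn]
    linarith
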